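/- Let k be even, A, B ∈ R with B ≠ 0, and M0 the (k+1)×(k+1) tridiagonal real matrix with diagonal A, superdiagonal (ℓ+1)B, subdiagonal −(k−ℓ)B. Then λ = A is the unique real eigenvalue of M0, and its eigenspace is one-dimensional. -/

import Mathlib

open Matrix

noncomputable section

/-- The `(k+1)×(k+1)` tridiagonal matrix with diagonal `A`, superdiagonal entries
`(ℓ+1)B` and subdiagonal entries `−(k−ℓ)B` (0-indexed). -/
def M0 (k : ℕ) (A B : ℝ) : Matrix (Fin (k+1)) (Fin (k+1)) ℝ :=
  fun i j =>
    if (i : ℕ) = (j : ℕ) then A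
    else if (j : ℕ) = (i : ℕ) + 1 then ((i : ℕ) + 1 : ℝ) * B
    else if (i : ℕ) = (j : ℕ) + 1 then -((k : ℝ) - (j : ℕ)) * B
    else 0

namespace M0Aux

/-- zero extension of a vector on `Fin (k+1)` to `ℕ`. -/
def zext (k : ℕ) (v : Fin (k+1) → ℝ) : ℕ → ℝ :=
  fun m => if h : m < k + 1 then v ⟨m, h⟩ else 0

lemma zext_val (k : ℕ) (v : Fin (k+1) → ℝ) (i : Fin (k+1)) : zext k v i = v i := by
  simp [zext, i.isLt, Fin.eta]

lemma row_lemma (k : ℕ) (A B : ℝ) (v : Fin (k+1) → ℝ) (i : Fin (k+1)) :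
    (M0 k A B).mulVec v i
      = A * v i + (((i:ℕ):ℝ)+1) * B * zext k v ((i:ℕ)+1)
        + (if 1 ≤ (i:ℕ) then -((k:ℝ) - (((i:ℕ):ℝ)-1)) * B * zext k v ((i:ℕ)-1) else 0) := by
  have hsplit : ∀ j : Fin (k+1), M0 k A B i j * v j
      = (if j = i then A * v j else 0)
        + (if (j:ℕ) = (i:ℕ)+1 then (((i:ℕ):ℝ)+1) * B * v j else 0)
        + (if (i:ℕ) = (j:ℕ)+1 then -((k:ℝ) - ((j:ℕ):ℝ)) * B * v j else 0) := by
    intro j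
    simp only [M0, Fin.ext_iff]
    split_ifs <;> first | ring1 | (exfalso; omega)
  unfold Matrix.mulVec dotProduct
  rw [Finset.sum_congr rfl fun j _ => hsplit j]
  rw [Finset.sum_add_distrib, Finset.sum_add_distrib]
  congr 1
  · congr 1
    · rw [Finset.sum_ite_eq' Finset.univ i]
      simp [zext_val]
    · by_cases hi : (i:ℕ) < k
      · have hco : ∀ j : Fin (k+1), ((j:ℕ) = (i:ℕ)+1) ↔ j = ⟨(i:ℕ)+1, by omega⟩ := by
          intro j; rw [Fin.ext_iff]
        rw [Finset.sum_congr rfl fun j _ => by rw [if_congr (hco j) rfl rfl]]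
        rw [Finset.sum_ite_eq' Finset.univ]
        simp only [Finset.mem_univ, if_true, zext]
        rw [dif_pos (by omega : (i:ℕ)+1 < k+1)]
      · have h1 : ∀ j : Fin (k+1), ¬ ((j:ℕ) = (i:ℕ)+1) := by
          intro j; have := j.isLt; have := i.isLt; omega
        rw [Finset.sum_congr rfl fun j _ => if_neg (h1 j)]
        have : ¬ ((i:ℕ)+1 < k+1) := by omega
        simp [zext, this]
  · by_cases hi : 1 ≤ (i:ℕ)
    · have hco : ∀ j : Fin (k+1), ((i:ℕ) = (j:ℕ)+1) ↔ j = ⟨(i:ℕ)-1, by omega⟩ := by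
        intro j; rw [Fin.ext_iff]; simp only []; omega
      rw [Finset.sum_congr rfl fun j _ => by rw [if_congr (hco j) rfl rfl]]
      rw [Finset.sum_ite_eq' Finset.univ]
      have hlt : (i:ℕ)-1 < k+1 := by omega
      have hc : (((i:ℕ)-1 : ℕ):ℝ) = ((i:ℕ):ℝ) - 1 := by
        rw [Nat.cast_sub hi, Nat.cast_one]
      simp only [Finset.mem_univ, if_true, if_pos hi, zext, dif_pos hlt]
      rw [hc]
    · have h1 : ∀ j : Fin (k+1), ¬ ((i:ℕ) = (j:ℕ)+1) := by intro j; omega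
      rw [Finset.sum_congr rfl fun j _ => if_neg (h1 j)]
      simp [hi]

/-- The row equations satisfied by an eigenvector of eigenvalue `A`, in zero-extended form. -/
lemma eigen_rec (k : ℕ) (A B : ℝ) (v : Fin (k+1) → ℝ)
    (h : (M0 k A B).mulVec v = A • v) :
    ∀ m : ℕ, m < k + 1 →
      ((m:ℝ)+1) * B * zext k v (m+1)
        + (if 1 ≤ m then -((k:ℝ) - ((m:ℝ)-1)) * B * zext k v (m-1) else 0) = 0 := by
  intro m hm
  have h1 := congrFun h ⟨m, hm⟩
  rw [row_lemma] at h1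
  simp only [Pi.smul_apply, smul_eq_mul] at h1
  linarith

/-- An eigenvector for `A` with vanishing first coordinate is zero. -/
lemma ker_unique (k : ℕ) (A B : ℝ) (hB : B ≠ 0) (v : Fin (k+1) → ℝ)
    (h : (M0 k A B).mulVec v = A • v) (h0 : v 0 = 0) : v = 0 := by
  have hrec := eigen_rec k A B v h
  have key : ∀ m : ℕ, zext k v m = 0 ∧ zext k v (m+1) = 0 := by
    intro m
    induction m with
    | zero =>
        constructor
        · have := zext_val k v 0
          simpa [h0] using this
        · have h1 := hrec 0 (by omega)
          simp only [if_neg (by omega : ¬ (1:ℕ) ≤ 0)] at h1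
          simp only [Nat.cast_zero, zero_add, one_mul, add_zero] at h1
          exact (mul_eq_zero.mp h1).resolve_left hB
    | succ m ih =>
        refine ⟨ih.2, ?_⟩
        by_cases hm : m + 1 < k + 1
        · have h1 := hrec (m+1) hm
          rw [if_pos (by omega : 1 ≤ m+1)] at h1
          simp only [Nat.add_sub_cancel] at h1
          rw [ih.1] at h1
          have hc : (((m:ℕ):ℝ)+1+1) * B ≠ 0 := by
            apply mul_ne_zero _ hB; positivity
          have := h1
          push_cast at this hc
          simp only [mul_zero, add_zero] at this
          rcases mul_eq_zero.mp this with h' | h'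
          · exact absurd h' hc
          · exact h'
        · unfold zext
          rw [dif_neg (by omega)]
  funext i
  have := (key i).1
  rwa [zext_val] at this

/-- weights making `M0` skew-symmetric away from the diagonal. -/
def wt (k : ℕ) (i : Fin (k+1)) : ℝ := ((k.choose i : ℕ) : ℝ)⁻¹

lemma wt_pos (k : ℕ) (i : Fin (k+1)) : 0 < wt k i := by
  have : 0 < k.choose i := Nat.choose_pos (by omega)
  unfold wt
  positivity

lemma key_binom (k : ℕ) (i : ℕ) (hi : i < k) :
    ((i:ℝ)+1) * ((k.choose i : ℕ):ℝ)⁻¹ = ((k:ℝ) - i) * ((k.choose (i+1) : ℕ):ℝ)⁻¹ := by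
  have h1 : k.choose (i+1) * (i+1) = k.choose i * (k - i) := Nat.choose_succ_right_eq k i
  have hc1 : (0:ℝ) < (k.choose i : ℕ) := by exact_mod_cast Nat.choose_pos (by omega)
  have hc2 : (0:ℝ) < (k.choose (i+1) : ℕ) := by exact_mod_cast Nat.choose_pos (by omega)
  have h2 : ((k.choose (i+1) : ℕ):ℝ) * ((i:ℝ)+1) = ((k.choose i : ℕ):ℝ) * ((k:ℝ) - i) := by
    have := congrArg (fun x : ℕ => (x:ℝ)) h1
    push_cast [Nat.cast_sub hi.le] at this
    linarith
  field_simp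
  linarith [h2]

lemma sym_entry (k : ℕ) (A B : ℝ) (i j : Fin (k+1)) :
    wt k i * M0 k A B i j + wt k j * M0 k A B j i
      = if i = j then 2 * A * wt k i else 0 := by
  have hkey : ∀ a b : Fin (k+1), (b:ℕ) = (a:ℕ)+1 →
      wt k a * ((((a:ℕ)):ℝ)+1) * B + wt k b * (-((k:ℝ) - ((a:ℕ):ℝ)) * B) = 0 := by
    intro a b hab
    have ha : (a:ℕ) < k := by have := b.isLt; omega
    have h := key_binom k a ha
    have hthis : wt k a * ((((a:ℕ)):ℝ)+1) = wt k b * ((k:ℝ) - ((a:ℕ):ℝ)) := by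
      unfold wt
      rw [hab]
      rw [mul_comm, mul_comm (((k.choose ((a:ℕ)+1) : ℕ):ℝ)⁻¹)]
      exact h
    linear_combination B * hthis
  rcases eq_or_ne i j with rfl | hij
  · have e : M0 k A B i i = A := by simp [M0]
    rw [e, if_pos rfl]
    ring1
  · rw [if_neg hij]
    have hijn : (i:ℕ) ≠ (j:ℕ) := fun h => hij (Fin.ext h)
    by_cases h1 : (j:ℕ) = (i:ℕ)+1
    · have e1 : M0 k A B i j = (((i:ℕ):ℝ)+1) * B := by
        simp only [M0, if_neg hijn, if_pos h1]
      have e2 : M0 k A B j i = -((k:ℝ) - ((i:ℕ):ℝ)) * B := by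
        simp only [M0]
        rw [if_neg (Ne.symm hijn), if_neg (by omega), if_pos (by omega)]
      rw [e1, e2]
      have := hkey i j h1
      nlinarith [this]
    · by_cases h2 : (i:ℕ) = (j:ℕ)+1
      · have e1 : M0 k A B i j = -((k:ℝ) - ((j:ℕ):ℝ)) * B := by
          simp only [M0]
          rw [if_neg hijn, if_neg (by omega), if_pos (by omega)]
        have e2 : M0 k A B j i = (((j:ℕ):ℝ)+1) * B := by
          simp only [M0]
          rw [if_neg (Ne.symm hijn), if_pos (by omega)]
        rw [e1, e2]
        have := hkey j i h2
        nlinarith [this]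
      · have e1 : M0 k A B i j = 0 := by
          simp only [M0]
          rw [if_neg hijn, if_neg h1, if_neg h2]
        have e2 : M0 k A B j i = 0 := by
          simp only [M0]
          rw [if_neg (Ne.symm hijn), if_neg (by omega), if_neg (by omega)]
        rw [e1, e2]; ring

/-- Any eigenvalue of `M0` equals `A`. -/
lemma eig_eq (k : ℕ) (A B : ℝ) (v : Fin (k+1) → ℝ) (hv : v ≠ 0) (lam : ℝ)
    (h : (M0 k A B).mulVec v = lam • v) : lam = A := by
  classical
  set W : Matrix (Fin (k+1)) (Fin (k+1)) ℝ := Matrix.diagonal (wt k) with hW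
  set S : Matrix (Fin (k+1)) (Fin (k+1)) ℝ := W * M0 k A B with hS
  have hSe : ∀ i j, S i j = wt k i * M0 k A B i j := by
    intro i j
    rw [hS, hW]
    simp [Matrix.diagonal_mul]
  have hSσ : S + Sᵀ = (2 * A) • W := by
    ext i j
    rw [Matrix.add_apply, Matrix.transpose_apply, hSe, hSe, sym_entry k A B i j,
      hW, Matrix.smul_apply, Matrix.diagonal_apply, smul_eq_mul]
    split_ifs with hij
    · ring
    · ring
  have hQ : 0 < dotProduct v (W.mulVec v) := by
    have he : dotProduct v (W.mulVec v) = ∑ i, wt k i * (v i)^2 := by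
      unfold dotProduct
      refine Finset.sum_congr rfl fun i _ => ?_
      rw [hW, Matrix.mulVec_diagonal]
      ring
    rw [he]
    have hvne : ∃ i, v i ≠ 0 := by
      by_contra hcon
      push_neg at hcon
      exact hv (funext hcon)
    obtain ⟨i0, hi0⟩ := hvne
    apply Finset.sum_pos'
    · intro i _
      have := wt_pos k i
      positivity
    · refine ⟨i0, Finset.mem_univ _, ?_⟩
      have := wt_pos k i0
      positivity
  have htrans : dotProduct v (Sᵀ.mulVec v) = dotProduct v (S.mulVec v) := by
    rw [Matrix.mulVec_transpose, dotProduct_comm, ← Matrix.dotProduct_mulVec]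
  have hform : 2 * dotProduct v (S.mulVec v)
      = 2 * A * dotProduct v (W.mulVec v) := by
    have h1 : dotProduct v ((S + Sᵀ).mulVec v)
        = 2 * dotProduct v (S.mulVec v) := by
      rw [Matrix.add_mulVec, dotProduct_add, htrans]; ring
    rw [← h1, hSσ, Matrix.smul_mulVec, dotProduct_smul, smul_eq_mul]
  have heig : dotProduct v (S.mulVec v)
      = lam * dotProduct v (W.mulVec v) := by
    rw [hS, ← Matrix.mulVec_mulVec, h, Matrix.mulVec_smul, dotProduct_smul, smul_eq_mul]
  have hfin : 2 * lam * dotProduct v (W.mulVec v)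
      = 2 * A * dotProduct v (W.mulVec v) := by
    rw [← hform, heig]; ring
  have := mul_right_cancel₀ (ne_of_gt hQ) hfin
  linarith

/-- the explicit candidate eigenvector (as a function on ℕ). -/
def Uf (n : ℕ) : ℕ → ℝ := fun m => if m % 2 = 0 then ((n.choose (m/2) : ℕ) : ℝ) else 0

lemma real_binom (n t : ℕ) :
    ((t:ℝ)+1) * ((n.choose (t+1) : ℕ):ℝ) = ((n:ℝ) - t) * ((n.choose t : ℕ):ℝ) := by
  rcases lt_or_ge t n with hlt | hge
  · have h1 : n.choose (t+1) * (t+1) = n.choose t * (n - t) := Nat.choose_succ_right_eq n t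
    have := congrArg (fun x : ℕ => (x:ℝ)) h1
    push_cast [Nat.cast_sub hlt.le] at this
    linarith
  · rcases eq_or_lt_of_le hge with rfl | hgt
    · simp [Nat.choose_succ_self]
    · rw [Nat.choose_eq_zero_of_lt hgt, Nat.choose_eq_zero_of_lt (by omega)]
      simp

def uvec (k n : ℕ) : Fin (k+1) → ℝ := fun i => Uf n (i : ℕ)

lemma zext_uvec (k n : ℕ) (hk : k = 2*n) (m : ℕ) : zext k (uvec k n) m = Uf n m := by
  subst hk
  unfold zext
  split_ifs with h
  · rfl
  · unfold Uf
    split_ifs with h2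
    · have hlt : n < m / 2 := by omega
      rw [Nat.choose_eq_zero_of_lt hlt]
      simp
    · rfl

lemma uvec_eigen (k n : ℕ) (hk : k = 2*n) (A B : ℝ) :
    (M0 k A B).mulVec (uvec k n) = A • (uvec k n) := by
  funext i
  rw [row_lemma, Pi.smul_apply, smul_eq_mul]
  rw [zext_uvec k n hk, zext_uvec k n hk]
  subst hk
  rcases Nat.even_or_odd (i : ℕ) with he | ho
  · obtain ⟨t2, ht2⟩ := he
    have h1 : ((i:ℕ)+1) % 2 = 1 := by omega
    have h2 : Uf n ((i:ℕ)+1) = 0 := by unfold Uf; rw [if_neg (by omega)]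
    rw [h2, mul_zero, add_zero]
    by_cases h3 : 1 ≤ (i:ℕ)
    · have h4 : ((i:ℕ)-1) % 2 = 1 := by omega
      have h5 : Uf n ((i:ℕ)-1) = 0 := by unfold Uf; rw [if_neg (by omega)]
      rw [if_pos h3, h5, mul_zero, add_zero]
    · rw [if_neg h3, add_zero]
  · obtain ⟨t, ht⟩ := ho
    have h3 : 1 ≤ (i:ℕ) := by omega
    rw [if_pos h3]
    have hU1 : Uf n ((i:ℕ)+1) = ((n.choose (t+1) : ℕ):ℝ) := by
      unfold Uf
      rw [if_pos (by omega)]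
      have hd : ((i:ℕ)+1)/2 = t+1 := by omega
      rw [hd]
    have hU2 : Uf n ((i:ℕ)-1) = ((n.choose t : ℕ):ℝ) := by
      unfold Uf
      rw [if_pos (by omega)]
      have hd : ((i:ℕ)-1)/2 = t := by omega
      rw [hd]
    rw [hU1, hU2]
    have hb := real_binom n t
    have hcast : ((i:ℕ):ℝ) = 2*(t:ℝ)+1 := by
      rw [ht]; push_cast; ring
    rw [hcast]
    push_cast
    linear_combination 2 * B * hb

lemma uvec_ne_zero (k n : ℕ) : uvec k n ≠ 0 := by
  intro hcon
  have h0 : uvec k n 0 = 0 := by rw [hcon]; rfl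
  unfold uvec Uf at h0
  simp at h0

end M0Aux

/-- For even `k` and `B ≠ 0`, `λ = A` is the unique real eigenvalue of `M0`, and the
corresponding eigenspace is one-dimensional. -/
theorem M0_unique_eigenvalue_of_even (k : ℕ) (hk : Even k) (A B : ℝ) (hB : B ≠ 0) :
    (∀ lam : ℝ, Module.End.HasEigenvalue (Matrix.toLin' (M0 k A B)) lam ↔ lam = A) ∧
    Module.finrank ℝ (Module.End.eigenspace (Matrix.toLin' (M0 k A B)) A) = 1 := by
  classical
  obtain ⟨n, hn⟩ := hk
  have hk2 : k = 2 * n := by omega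
  set E := Module.End.eigenspace (Matrix.toLin' (M0 k A B)) A with hE
  have hmemu : M0Aux.uvec k n ∈ E := by
    rw [hE, Module.End.mem_eigenspace_iff, Matrix.toLin'_apply]
    exact M0Aux.uvec_eigen k n hk2 A B
  have hune : (M0Aux.uvec k n : Fin (k+1) → ℝ) ≠ 0 := M0Aux.uvec_ne_zero k n
  constructor
  · intro lam
    constructor
    · intro hlam
      obtain ⟨x, hx⟩ := hlam.exists_hasEigenvector
      have hx1 : (M0 k A B).mulVec x = lam • x := by
        rw [← Matrix.toLin'_apply]
        exact Module.End.mem_eigenspace_iff.mp hx.1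
      exact M0Aux.eig_eq k A B x hx.2 lam hx1
    · rintro rfl
      exact Module.End.hasEigenvalue_of_hasEigenvector ⟨hmemu, hune⟩
  · -- dimension count
    have hinj : Function.Injective
        ((LinearMap.proj (0 : Fin (k+1))).comp E.subtype) := by
      intro a b hab
      simp only [LinearMap.comp_apply, LinearMap.proj_apply, Submodule.coe_subtype] at hab
      have hd : ((a : Fin (k+1) → ℝ) - b) ∈ E := sub_mem a.2 b.2
      have hde : (M0 k A B).mulVec ((a : Fin (k+1) → ℝ) - b)
          = A • ((a : Fin (k+1) → ℝ) - b) := by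
        rw [← Matrix.toLin'_apply]
        exact Module.End.mem_eigenspace_iff.mp hd
      have h0 : ((a : Fin (k+1) → ℝ) - b) 0 = 0 := by
        simp [hab]
      have := M0Aux.ker_unique k A B hB _ hde h0
      have : (a : Fin (k+1) → ℝ) = b := by
        have := sub_eq_zero.mp this
        exact this
      exact Subtype.ext this
    have hle : Module.finrank ℝ E ≤ 1 := by
      have := LinearMap.finrank_le_finrank_of_injective hinj
      simpa using this
    have hpos : 0 < Module.finrank ℝ E := by
      rw [Module.finrank_pos_iff]
      exact ⟨⟨⟨M0Aux.uvec k n, hmemu⟩, 0,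
        fun hcon => hune (by exact congrArg Subtype.val hcon)⟩⟩
    omega

end
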